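/- arXiv:1403.7019 — 4 statements merged into one kernel-verified Lean document; each statement's English description precedes it below -/
import Mathlib

section
/- Suppose there exist η̄ ∈ range(Dᵀ), ω̄ ∈ ℝⁿ and V̄ ∈ ℝⁿ with all entries positive such that 0 = Dᵀω̄, 0 = ū − D·Γ(V̄)·sin(η̄) − A·ω̄ − P^l, and 0 = −E(η̄)·V̄ + Ē_fd, for given constant vectors ū, P^l ∈ ℝⁿ. Then necessarily ω̄ = ω*·1ₙ where ω* = (1ₙᵀ(ū − P^l))/(1ₙᵀA1ₙ), and moreover (I − A·1ₙ1ₙᵀ/(1ₙᵀA1ₙ))·(ū − P^l) = D·Γ(V̄)·sin(η̄); in particular this vector lies in the set 𝒟 = {v ∈ range(D) : v = D·Γ(V̄)·sin(η̄) for some η̄ ∈ range(Dᵀ), V̄ ∈ ℝⁿ with positive entries}. -/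
open Matrix Real Filter Topology Set

noncomputable section

/-- `Vec n` is `ℝⁿ`. -/
abbrev Vec (n : ℕ) := Fin n → ℝ

/-- Incidence matrix of the (undirected, arbitrarily oriented) graph whose `m` edges have
endpoints `ep1 k` (positive end) and `ep2 k` (negative end). -/
def incD {n m : ℕ} (ep1 ep2 : Fin m → Fin n) : Matrix (Fin n) (Fin m) ℝ :=
  Matrix.of fun i k => if i = ep1 k then 1 else if i = ep2 k then -1 else 0

/-- `Γ(V) = diag(γ₁,…,γ_m)`, `γ_k = V_i V_j B_{ij}` for edge `k = {i,j}`. -/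
def Gam {n m : ℕ} (ep1 ep2 : Fin m → Fin n) (B : Fin m → ℝ) (V : Vec n) :
    Matrix (Fin m) (Fin m) ℝ :=
  Matrix.diagonal fun k => V (ep1 k) * V (ep2 k) * B k

/-- The matrix `E(η)`. -/
def Emat {n m : ℕ} (ep1 ep2 : Fin m → Fin n) (B : Fin m → ℝ)
    (Bii Xd Xd' : Vec n) (η : Vec m) : Matrix (Fin n) (Fin n) ℝ :=
  Matrix.of fun i j =>
    if i = j then (1 - Bii i * (Xd i - Xd' i)) / (Xd i - Xd' i)
    else -∑ k, (if (ep1 k = i ∧ ep2 k = j) ∨ (ep1 k = j ∧ ep2 k = i)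
      then B k * Real.cos (η k) else 0)

/-- The diagonal matrix `F`. -/
def Fmat {n : ℕ} (Bii Xd Xd' : Vec n) : Matrix (Fin n) (Fin n) ℝ :=
  Matrix.diagonal fun i => (1 - Bii i * (Xd i - Xd' i)) / (Xd i - Xd' i)

/-- componentwise sine -/
def sinv {m : ℕ} (η : Vec m) : Vec m := fun k => Real.sin (η k)
/-- componentwise cosine -/
def cosv {m : ℕ} (η : Vec m) : Vec m := fun k => Real.cos (η k)

/-- The storage function `W₂` with reference point `(ηb, Vb)`. -/
def W2 {n m : ℕ} (ep1 ep2 : Fin m → Fin n) (B : Fin m → ℝ) (Bii Xd Xd' : Vec n)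
    (Efd : Vec n) (ηb : Vec m) (Vb : Vec n) (η : Vec m) (V : Vec n) : ℝ :=
  -((1 : Vec m) ⬝ᵥ (Gam ep1 ep2 B V).mulVec (cosv η))
    + (1 : Vec m) ⬝ᵥ (Gam ep1 ep2 B Vb).mulVec (cosv ηb)
    - ((Gam ep1 ep2 B Vb).mulVec (sinv ηb)) ⬝ᵥ (η - ηb)
    - Efd ⬝ᵥ (V - Vb)
    + (1 / 2) * (V ⬝ᵥ (Fmat Bii Xd Xd').mulVec V)
    - (1 / 2) * (Vb ⬝ᵥ (Fmat Bii Xd Xd').mulVec Vb)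

/-- entrywise absolute value `|D|` of the incidence matrix. -/
def absD {n m : ℕ} (ep1 ep2 : Fin m → Fin n) : Matrix (Fin n) (Fin m) ℝ :=
  Matrix.of fun i k => |incD ep1 ep2 i k|

/-- The matrix `E(η̄) − diag(V̄)⁻¹|D|Γ(V̄)diag(sin η̄)diag(cos η̄)⁻¹diag(sin η̄)|D|ᵀdiag(V̄)⁻¹`
appearing in Assumption 3. -/
def Schur {n m : ℕ} (ep1 ep2 : Fin m → Fin n) (B : Fin m → ℝ) (Bii Xd Xd' : Vec n)
    (ηb : Vec m) (Vb : Vec n) : Matrix (Fin n) (Fin n) ℝ :=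
  Emat ep1 ep2 B Bii Xd Xd' ηb -
    (Matrix.diagonal fun i => (Vb i)⁻¹) * absD ep1 ep2 * Gam ep1 ep2 B Vb *
      Matrix.diagonal (sinv ηb) * (Matrix.diagonal (cosv ηb))⁻¹ *
      Matrix.diagonal (sinv ηb) * (absD ep1 ep2)ᵀ * (Matrix.diagonal fun i => (Vb i)⁻¹)

/-- Lemma 1: at any steady state with synchronous frequency, the frequency
deviation is `ω* = 1ᵀ(ū − Pˡ)/(1ᵀA1)` at every node, and
`(I − A11ᵀ/(1ᵀA1))(ū − Pˡ) = DΓ(V̄)sin(η̄)`, which in particular lies in the set `𝒟`. -/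
theorem steady_state_frequency
    {n m : ℕ} (ep1 ep2 : Fin m → Fin n) (hep : ∀ k, ep1 k ≠ ep2 k)
    (B : Fin m → ℝ) (hB : ∀ k, 0 < B k)
    (Bii Xd Xd' : Vec n)
    (a : Vec n) (ha : ∀ i, 0 < a i)
    -- connectedness of the graph: the kernel of `Dᵀ` consists of the constant vectors
    (hconn : ∀ x : Vec n, (incD ep1 ep2)ᵀ.mulVec x = 0 → ∃ c : ℝ, x = fun _ => c)
    (ub Pl Efd : Vec n)
    (ηb : Vec m) (hηb : ∃ δ : Vec n, ηb = (incD ep1 ep2)ᵀ.mulVec δ)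
    (ωb : Vec n) (Vb : Vec n) (hVb : ∀ i, 0 < Vb i)
    (heq1 : (incD ep1 ep2)ᵀ.mulVec ωb = 0)
    (heq2 : (0 : Vec n) = ub - (incD ep1 ep2).mulVec ((Gam ep1 ep2 B Vb).mulVec (sinv ηb))
      - (Matrix.diagonal a).mulVec ωb - Pl)
    (heq3 : (0 : Vec n) = -(Emat ep1 ep2 B Bii Xd Xd' ηb).mulVec Vb + Efd) :
    ωb = (fun _ => (∑ i, (ub i - Pl i)) / (∑ i, a i)) ∧
    (fun i => (ub i - Pl i) - a i * ((∑ j, (ub j - Pl j)) / (∑ j, a j)))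
      = (incD ep1 ep2).mulVec ((Gam ep1 ep2 B Vb).mulVec (sinv ηb)) ∧
    (fun i => (ub i - Pl i) - a i * ((∑ j, (ub j - Pl j)) / (∑ j, a j))) ∈
      {v : Vec n | (∃ w : Vec m, v = (incD ep1 ep2).mulVec w) ∧
        ∃ η' : Vec m, (∃ δ : Vec n, η' = (incD ep1 ep2)ᵀ.mulVec δ) ∧
        ∃ V' : Vec n, (∀ i, 0 < V' i) ∧
          v = (incD ep1 ep2).mulVec ((Gam ep1 ep2 B V').mulVec (sinv η'))} := by
  set v := (Gam ep1 ep2 B Vb).mulVec (sinv ηb) with hv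
  rcases isEmpty_or_nonempty (Fin n) with hE | hNE
  · refine ⟨funext fun i => hE.elim i, funext fun i => hE.elim i,
      ⟨⟨v, funext fun i => hE.elim i⟩, ηb, hηb, Vb, hVb, funext fun i => hE.elim i⟩⟩
  obtain ⟨c, hc⟩ := hconn ωb heq1
  have hcol : ∀ k, ∑ i, incD ep1 ep2 i k = 0 := by
    intro k
    have h : ∀ i, incD ep1 ep2 i k
        = (if i = ep1 k then (1:ℝ) else 0) + (if i = ep2 k then (-1:ℝ) else 0) := by
      intro i
      by_cases h1 : i = ep1 k <;> by_cases h2 : i = ep2 k <;>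
        simp [incD, h1, h2, hep k, Ne.symm (hep k)]
    simp [h, Finset.sum_add_distrib]
  have hsumD : ∀ y : Vec m, ∑ i, (incD ep1 ep2).mulVec y i = 0 := by
    intro y
    simp only [Matrix.mulVec, dotProduct]
    rw [Finset.sum_comm]
    simp [← Finset.sum_mul, hcol]
  have hApos : 0 < ∑ i, a i := Finset.sum_pos (fun i _ => ha i) Finset.univ_nonempty
  have heq2' : ∀ i, ub i - Pl i = (incD ep1 ep2).mulVec v i + a i * c := by
    intro i
    have h := congrFun heq2 i
    have hωi : ωb i = c := by rw [hc]
    simp only [Pi.zero_apply, Pi.sub_apply, Matrix.mulVec_diagonal, hωi] at h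
    linarith
  have hsum : ∑ i, (ub i - Pl i) = c * ∑ i, a i := by
    calc ∑ i, (ub i - Pl i)
        = ∑ i, ((incD ep1 ep2).mulVec v i + a i * c) :=
          Finset.sum_congr rfl fun i _ => heq2' i
      _ = (∑ i, (incD ep1 ep2).mulVec v i) + ∑ i, a i * c := Finset.sum_add_distrib
      _ = c * ∑ i, a i := by
          rw [hsumD, zero_add, Finset.mul_sum]
          exact Finset.sum_congr rfl fun i _ => mul_comm _ _
  have hcval : c = (∑ i, (ub i - Pl i)) / (∑ i, a i) := by
    field_simp [hsum]
    linarith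
  have h2 : (fun i => (ub i - Pl i) - a i * ((∑ j, (ub j - Pl j)) / (∑ j, a j)))
      = (incD ep1 ep2).mulVec v := by
    funext i
    have := heq2' i
    rw [← hcval]
    linarith
  exact ⟨by rw [hc, hcval], h2, ⟨v, h2⟩, ηb, hηb, Vb, hVb, h2⟩
end
end

section
/- Suppose η̄ ∈ (−π/2, π/2)^m, V̄ ∈ ℝⁿ has all entries positive, E(η̄)·V̄ = Ē_fd, and the matrix E(η̄) − diag(V̄)⁻¹·|D|·Γ(V̄)·diag(sin(η̄))·diag(cos(η̄))⁻¹·diag(sin(η̄))·|D|ᵀ·diag(V̄)⁻¹ is positive definite, where |D| denotes the entrywise absolute value of D. Then the function (η, V) ↦ W₂(η, V) has a strict local minimum at (η̄, V̄): there is a neighborhood of (η̄, V̄) on which W₂(η, V) > W₂(η̄, V̄) = 0 for every (η, V) ≠ (η̄, V̄). -/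
open Matrix Real Filter Topology Set

noncomputable section

lemma edge_sum {n m : ℕ} {ep1 ep2 : Fin m → Fin n} (hep : ∀ k, ep1 k ≠ ep2 k)
    (k : Fin m) (w : Vec n) (i : Fin n) (t : ℝ) :
    ∑ j, (if (ep1 k = i ∧ ep2 k = j) ∨ (ep1 k = j ∧ ep2 k = i) then t * w j else 0)
    = (if ep1 k = i then t * w (ep2 k) else 0) + (if ep2 k = i then t * w (ep1 k) else 0) := by
  by_cases h1 : ep1 k = i <;> by_cases h2 : ep2 k = i
  · exact absurd (h1.trans h2.symm) (hep k)
  · simp [h1, h2, fun j => (show ¬ (ep1 k = j ∧ ep2 k = i) from fun ⟨_, hh⟩ => h2 hh), Finset.sum_ite_eq]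
  · simp [h1, h2, fun j => (show ¬ (ep1 k = i ∧ ep2 k = j) from fun ⟨hh, _⟩ => h1 hh), Finset.sum_ite_eq]
  · simp [h1, h2]

lemma Emat_mulVec_apply {n m : ℕ} {ep1 ep2 : Fin m → Fin n} (hep : ∀ k, ep1 k ≠ ep2 k)
    (B : Fin m → ℝ) (Bii Xd Xd' : Vec n) (η : Vec m) (w : Vec n) (i : Fin n) :
    (Emat ep1 ep2 B Bii Xd Xd' η).mulVec w i
    = (1 - Bii i * (Xd i - Xd' i)) / (Xd i - Xd' i) * w i
      - ∑ k, ((if ep1 k = i then B k * Real.cos (η k) * w (ep2 k) else 0)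
            + (if ep2 k = i then B k * Real.cos (η k) * w (ep1 k) else 0)) := by
  have key : ∀ j, (Emat ep1 ep2 B Bii Xd Xd' η) i j * w j
      = (if i = j then (1 - Bii i * (Xd i - Xd' i)) / (Xd i - Xd' i) * w j else 0)
        - ∑ k, (if (ep1 k = i ∧ ep2 k = j) ∨ (ep1 k = j ∧ ep2 k = i)
            then B k * Real.cos (η k) * w j else 0) := by
    intro j
    by_cases hij : i = j
    · subst hij
      have hz : ∀ k ∈ Finset.univ, ((if (ep1 k = i ∧ ep2 k = i) ∨ (ep1 k = i ∧ ep2 k = i)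
          then B k * Real.cos (η k) * w i else 0) : ℝ) = 0 := by
        intro k _
        rw [if_neg]
        rintro (⟨h1, h2⟩ | ⟨h1, h2⟩) <;> exact hep k (h1.trans h2.symm)
      rw [Finset.sum_eq_zero hz, sub_zero]
      simp [Emat]
    · simp only [Emat, Matrix.of_apply, if_neg hij]
      rw [neg_mul, Finset.sum_mul, zero_sub, neg_inj]
      exact Finset.sum_congr rfl fun k _ => by
        by_cases hc : (ep1 k = i ∧ ep2 k = j) ∨ (ep1 k = j ∧ ep2 k = i) <;> simp [hc]
  unfold Matrix.mulVec dotProduct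
  rw [Finset.sum_congr rfl (fun j _ => key j), Finset.sum_sub_distrib, Finset.sum_ite_eq,
    if_pos (Finset.mem_univ i), Finset.sum_comm]
  congr 1
  exact Finset.sum_congr rfl fun k _ => edge_sum hep k w i _

lemma Emat_dot {n m : ℕ} {ep1 ep2 : Fin m → Fin n} (hep : ∀ k, ep1 k ≠ ep2 k)
    (B : Fin m → ℝ) (Bii Xd Xd' : Vec n) (η : Vec m) (v w : Vec n) :
    v ⬝ᵥ (Emat ep1 ep2 B Bii Xd Xd' η).mulVec w
    = ∑ i, (1 - Bii i * (Xd i - Xd' i)) / (Xd i - Xd' i) * v i * w i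
      - ∑ k, B k * Real.cos (η k) * (v (ep1 k) * w (ep2 k) + v (ep2 k) * w (ep1 k)) := by
  unfold dotProduct
  rw [Finset.sum_congr rfl (fun i _ => by
    rw [Emat_mulVec_apply hep B Bii Xd Xd' η w i, mul_sub, Finset.mul_sum]),
    Finset.sum_sub_distrib]
  congr 1
  · exact Finset.sum_congr rfl fun i _ => by ring
  · rw [Finset.sum_comm]
    refine Finset.sum_congr rfl fun k _ => ?_
    simp only [mul_add, Finset.sum_add_distrib, mul_ite, mul_zero,
      Finset.sum_ite_eq Finset.univ, Finset.mem_univ, if_pos]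
    ring

lemma gam_one_dot {n m : ℕ} (ep1 ep2 : Fin m → Fin n) (B : Fin m → ℝ) (V : Vec n) (f : Vec m) :
    (1 : Vec m) ⬝ᵥ (Gam ep1 ep2 B V).mulVec f = ∑ k, V (ep1 k) * V (ep2 k) * B k * f k := by
  simp [Gam, dotProduct, Matrix.mulVec_diagonal]

lemma gam_dot {n m : ℕ} (ep1 ep2 : Fin m → Fin n) (B : Fin m → ℝ) (V : Vec n) (f x : Vec m) :
    ((Gam ep1 ep2 B V).mulVec f) ⬝ᵥ x = ∑ k, V (ep1 k) * V (ep2 k) * B k * f k * x k := by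
  simp [Gam, dotProduct, Matrix.mulVec_diagonal]

lemma fmat_dot {n : ℕ} (Bii Xd Xd' : Vec n) (v w : Vec n) :
    v ⬝ᵥ (Fmat Bii Xd Xd').mulVec w
    = ∑ i, (1 - Bii i * (Xd i - Xd' i)) / (Xd i - Xd' i) * v i * w i := by
  simp only [Fmat, dotProduct, Matrix.mulVec_diagonal]
  exact Finset.sum_congr rfl fun i _ => by ring

/-- quadratic part -/

lemma merge_main {κ ι : Type*} [Fintype κ] [Fintype ι] (a b c e q r : κ → ℝ) (d f g p : ι → ℝ)
    (hk : ∀ k, -(a k) + b k - c k + e k = q k + r k)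
    (hi : ∀ i, -(d i) + (1/2) * f i - (1/2) * g i = (1/2) * p i) :
    -(∑ k, a k) + (∑ k, b k) - (∑ k, c k) - ((∑ i, d i) - (∑ k, e k))
      + 1/2 * (∑ i, f i) - 1/2 * (∑ i, g i)
    = ((1/2) * (∑ i, p i) + ∑ k, q k) + ∑ k, r k := by
  have h1 : ∑ k, (-(a k) + b k - c k + e k) = ∑ k, (q k + r k) :=
    Finset.sum_congr rfl fun k _ => hk k
  have h2 : ∑ i, (-(d i) + (1/2) * f i - (1/2) * g i) = ∑ i, (1/2) * p i :=
    Finset.sum_congr rfl fun i _ => hi i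
  simp only [Finset.sum_add_distrib, Finset.sum_sub_distrib, Finset.sum_neg_distrib,
    ← Finset.mul_sum] at h1 h2
  linarith

def qQ {n m : ℕ} (ep1 ep2 : Fin m → Fin n) (B : Fin m → ℝ) (Bii Xd Xd' : Vec n)
    (ηb : Vec m) (Vb : Vec n) (δ : Vec m) (Δ : Vec n) : ℝ :=
  (1/2) * ∑ i, (1 - Bii i * (Xd i - Xd' i)) / (Xd i - Xd' i) * (Δ i)^2
  + ∑ k, B k * (Real.sin (ηb k) * δ k * (Vb (ep1 k) * Δ (ep2 k) + Vb (ep2 k) * Δ (ep1 k))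
      + (1/2) * (Vb (ep1 k) * Vb (ep2 k)) * Real.cos (ηb k) * (δ k)^2
      - Real.cos (ηb k) * Δ (ep1 k) * Δ (ep2 k))

/-- remainder part -/

def qR {n m : ℕ} (ep1 ep2 : Fin m → Fin n) (B : Fin m → ℝ)
    (ηb : Vec m) (Vb : Vec n) (δ : Vec m) (Δ : Vec n) : ℝ :=
  ∑ k, B k * (Real.sin (ηb k) * δ k * Δ (ep1 k) * Δ (ep2 k)
    + Real.cos (ηb k) / 2 * (Vb (ep1 k) * Δ (ep2 k) + Vb (ep2 k) * Δ (ep1 k)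
        + Δ (ep1 k) * Δ (ep2 k)) * (δ k)^2
    + (Vb (ep1 k) + Δ (ep1 k)) * (Vb (ep2 k) + Δ (ep2 k))
      * (Real.cos (ηb k) - Real.cos (ηb k + δ k) - Real.sin (ηb k) * δ k
          - Real.cos (ηb k) * (δ k)^2 / 2))

lemma W2_expand {n m : ℕ} {ep1 ep2 : Fin m → Fin n} (hep : ∀ k, ep1 k ≠ ep2 k)
    (B : Fin m → ℝ) (Bii Xd Xd' : Vec n) (ηb : Vec m) (Vb : Vec n) (δ : Vec m) (Δ : Vec n) :
    W2 ep1 ep2 B Bii Xd Xd' ((Emat ep1 ep2 B Bii Xd Xd' ηb).mulVec Vb) ηb Vb (ηb + δ) (Vb + Δ)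
    = qQ ep1 ep2 B Bii Xd Xd' ηb Vb δ Δ + qR ep1 ep2 B ηb Vb δ Δ := by
  have hd : ((Emat ep1 ep2 B Bii Xd Xd' ηb).mulVec Vb) ⬝ᵥ ((Vb + Δ) - Vb)
      = ∑ i, (1 - Bii i * (Xd i - Xd' i)) / (Xd i - Xd' i) * Vb i * Δ i
        - ∑ k, B k * Real.cos (ηb k) * (Vb (ep2 k) * Δ (ep1 k) + Vb (ep1 k) * Δ (ep2 k)) := by
    rw [add_sub_cancel_left, dotProduct_comm, Emat_dot hep]
    congr 1
    · exact Finset.sum_congr rfl fun i _ => by ring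
    · exact Finset.sum_congr rfl fun k _ => by ring
  rw [W2, hd, gam_one_dot, gam_one_dot, gam_dot, add_sub_cancel_left, fmat_dot, fmat_dot]
  simp only [cosv, sinv, Pi.add_apply]
  rw [qQ, qR]
  exact merge_main _ _ _ _ _ _ _ _ _ _ (fun k => by ring) (fun i => by ring)

lemma absD_apply {n m : ℕ} (ep1 ep2 : Fin m → Fin n) (i : Fin n) (k : Fin m) :
    absD ep1 ep2 i k = if i = ep1 k then 1 else if i = ep2 k then 1 else 0 := by
  unfold absD incD
  by_cases h1 : i = ep1 k <;> by_cases h2 : i = ep2 k <;>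
    simp [h1, h2] <;>
    first
      | rfl
      | (rw [if_neg (fun h => h1 (h2.trans h))]; norm_num)

lemma absDT_mulVec {n m : ℕ} {ep1 ep2 : Fin m → Fin n} (hep : ∀ k, ep1 k ≠ ep2 k)
    (w : Vec n) : (absD ep1 ep2)ᵀ.mulVec w = fun k => w (ep1 k) + w (ep2 k) := by
  funext k
  show ∑ i, (absD ep1 ep2)ᵀ k i * w i = _
  have : ∀ i, (absD ep1 ep2)ᵀ k i * w i
      = (if i = ep1 k then w i else 0) + (if i = ep2 k then w i else 0) := by
    intro i
    rw [Matrix.transpose_apply, absD_apply]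
    by_cases h1 : i = ep1 k <;> by_cases h2 : i = ep2 k
    · exact absurd (h1.symm.trans h2) (hep k)
    all_goals simp [h1, h2, hep k, (hep k).symm]
  rw [Finset.sum_congr rfl fun i _ => this i, Finset.sum_add_distrib]
  simp [Finset.sum_ite_eq' Finset.univ]

lemma dot_absD {n m : ℕ} {ep1 ep2 : Fin m → Fin n} (hep : ∀ k, ep1 k ≠ ep2 k)
    (v : Vec n) (y : Vec m) :
    v ⬝ᵥ (absD ep1 ep2).mulVec y = ∑ k, (v (ep1 k) + v (ep2 k)) * y k := by
  rw [Matrix.dotProduct_mulVec]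
  have : Matrix.vecMul v (absD ep1 ep2) = fun k => v (ep1 k) + v (ep2 k) := by
    have := absDT_mulVec hep (ep1 := ep1) (ep2 := ep2) v
    rw [← this]
    funext k
    rw [Matrix.mulVec, Matrix.vecMul]
    simp [dotProduct, Matrix.transpose_apply, mul_comm]
  rw [this, dotProduct]

lemma Schur_quad {n m : ℕ} {ep1 ep2 : Fin m → Fin n} (hep : ∀ k, ep1 k ≠ ep2 k)
    (B : Fin m → ℝ) (Bii Xd Xd' : Vec n) (ηb : Vec m) (Vb : Vec n)
    (hc : ∀ k, Real.cos (ηb k) ≠ 0) (Δ : Vec n) :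
    Δ ⬝ᵥ (Schur ep1 ep2 B Bii Xd Xd' ηb Vb).mulVec Δ
    = ∑ i, (1 - Bii i * (Xd i - Xd' i)) / (Xd i - Xd' i) * Δ i * Δ i
      - ∑ k, B k * Real.cos (ηb k) * (Δ (ep1 k) * Δ (ep2 k) + Δ (ep2 k) * Δ (ep1 k))
      - ∑ k, Vb (ep1 k) * Vb (ep2 k) * B k * Real.sin (ηb k) ^ 2 * (Real.cos (ηb k))⁻¹
          * ((Vb (ep1 k))⁻¹ * Δ (ep1 k) + (Vb (ep2 k))⁻¹ * Δ (ep2 k)) ^ 2 := by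
  have hCinv : (Matrix.diagonal (cosv ηb))⁻¹
      = Matrix.diagonal (fun k => (Real.cos (ηb k))⁻¹) := by
    apply Matrix.inv_eq_right_inv
    rw [Matrix.diagonal_mul_diagonal]
    rw [show (fun k => cosv ηb k * (Real.cos (ηb k))⁻¹) = fun _ => (1 : ℝ) from
      funext fun k => mul_inv_cancel₀ (hc k)]
    exact Matrix.diagonal_one
  rw [Schur, Matrix.sub_mulVec, dotProduct_sub, Emat_dot hep, hCinv]
  have hsq : Δ ⬝ᵥ ((Matrix.diagonal fun i => (Vb i)⁻¹) * absD ep1 ep2 * Gam ep1 ep2 B Vb *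
      Matrix.diagonal (sinv ηb) * Matrix.diagonal (fun k => (Real.cos (ηb k))⁻¹) *
      Matrix.diagonal (sinv ηb) * (absD ep1 ep2)ᵀ * (Matrix.diagonal fun i => (Vb i)⁻¹)).mulVec Δ
      = ∑ k, Vb (ep1 k) * Vb (ep2 k) * B k * Real.sin (ηb k) ^ 2 * (Real.cos (ηb k))⁻¹
          * ((Vb (ep1 k))⁻¹ * Δ (ep1 k) + (Vb (ep2 k))⁻¹ * Δ (ep2 k)) ^ 2 := by
    simp only [← Matrix.mulVec_mulVec]
    set w : Vec n := fun i => (Vb i)⁻¹ * Δ i with hw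
    have h8 : (Matrix.diagonal fun i => (Vb i)⁻¹).mulVec Δ = w := by
      funext i; rw [Matrix.mulVec_diagonal]
    rw [h8, absDT_mulVec hep]
    have hrest : (Gam ep1 ep2 B Vb).mulVec ((Matrix.diagonal (sinv ηb)).mulVec
        ((Matrix.diagonal fun k => (Real.cos (ηb k))⁻¹).mulVec
          ((Matrix.diagonal (sinv ηb)).mulVec (fun k => w (ep1 k) + w (ep2 k)))))
        = fun k => Vb (ep1 k) * Vb (ep2 k) * B k * (Real.sin (ηb k) *
            ((Real.cos (ηb k))⁻¹ * (Real.sin (ηb k) * (w (ep1 k) + w (ep2 k))))) := by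
      funext k
      simp only [Gam, sinv, Matrix.mulVec_diagonal]
    rw [hrest]
    have hfin : Δ ⬝ᵥ (Matrix.diagonal fun i => (Vb i)⁻¹).mulVec
        ((absD ep1 ep2).mulVec (fun k => Vb (ep1 k) * Vb (ep2 k) * B k * (Real.sin (ηb k) *
            ((Real.cos (ηb k))⁻¹ * (Real.sin (ηb k) * (w (ep1 k) + w (ep2 k)))))))
        = w ⬝ᵥ ((absD ep1 ep2).mulVec (fun k => Vb (ep1 k) * Vb (ep2 k) * B k * (Real.sin (ηb k) *
            ((Real.cos (ηb k))⁻¹ * (Real.sin (ηb k) * (w (ep1 k) + w (ep2 k))))))) := by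
      rw [dotProduct, dotProduct]
      refine Finset.sum_congr rfl fun i _ => ?_
      rw [Matrix.mulVec_diagonal]
      ring
    rw [hfin, dot_absD hep]
    exact Finset.sum_congr rfl fun k _ => by rw [hw]; ring
  rw [hsq]

lemma qQ_decomp {n m : ℕ} {ep1 ep2 : Fin m → Fin n} (hep : ∀ k, ep1 k ≠ ep2 k)
    {B : Fin m → ℝ} (hB : ∀ k, 0 < B k) (Bii Xd Xd' : Vec n) {ηb : Vec m} {Vb : Vec n}
    (hc : ∀ k, 0 < Real.cos (ηb k)) (hVb : ∀ i, 0 < Vb i) (δ : Vec m) (Δ : Vec n) :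
    qQ ep1 ep2 B Bii Xd Xd' ηb Vb δ Δ
    = ∑ k, (Vb (ep1 k) * Vb (ep2 k) * B k * Real.cos (ηb k) / 2)
        * (δ k + (B k * Real.sin (ηb k) * (Vb (ep1 k) * Δ (ep2 k) + Vb (ep2 k) * Δ (ep1 k)))
            / (Vb (ep1 k) * Vb (ep2 k) * B k * Real.cos (ηb k))) ^ 2
      + (1/2) * (Δ ⬝ᵥ (Schur ep1 ep2 B Bii Xd Xd' ηb Vb).mulVec Δ) := by
  rw [Schur_quad hep B Bii Xd Xd' ηb Vb (fun k => (hc k).ne'), qQ]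
  have key : ∀ k ∈ Finset.univ, (B k * (Real.sin (ηb k) * δ k * (Vb (ep1 k) * Δ (ep2 k)
        + Vb (ep2 k) * Δ (ep1 k))
      + (1/2) * (Vb (ep1 k) * Vb (ep2 k)) * Real.cos (ηb k) * (δ k)^2
      - Real.cos (ηb k) * Δ (ep1 k) * Δ (ep2 k)) : ℝ)
      = (Vb (ep1 k) * Vb (ep2 k) * B k * Real.cos (ηb k) / 2)
          * (δ k + (B k * Real.sin (ηb k) * (Vb (ep1 k) * Δ (ep2 k) + Vb (ep2 k) * Δ (ep1 k)))
              / (Vb (ep1 k) * Vb (ep2 k) * B k * Real.cos (ηb k))) ^ 2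
        - (1/2) * (B k * Real.cos (ηb k) * (Δ (ep1 k) * Δ (ep2 k) + Δ (ep2 k) * Δ (ep1 k)))
        - (1/2) * (Vb (ep1 k) * Vb (ep2 k) * B k * Real.sin (ηb k) ^ 2 * (Real.cos (ηb k))⁻¹
            * ((Vb (ep1 k))⁻¹ * Δ (ep1 k) + (Vb (ep2 k))⁻¹ * Δ (ep2 k)) ^ 2) := by
    intro k _
    have h1 : Vb (ep1 k) ≠ 0 := (hVb _).ne'
    have h2 : Vb (ep2 k) ≠ 0 := (hVb _).ne'
    have h3 : B k ≠ 0 := (hB _).ne'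
    have h4 : Real.cos (ηb k) ≠ 0 := (hc _).ne'
    field_simp
    ring
  rw [Finset.sum_congr rfl key, Finset.sum_sub_distrib, Finset.sum_sub_distrib,
    ← Finset.mul_sum, ← Finset.mul_sum]
  have hI : (∑ i, (1 - Bii i * (Xd i - Xd' i)) / (Xd i - Xd' i) * Δ i * Δ i)
      = ∑ i, (1 - Bii i * (Xd i - Xd' i)) / (Xd i - Xd' i) * (Δ i)^2 :=
    Finset.sum_congr rfl fun i _ => by ring
  rw [hI]
  ring

lemma qQ_pos {n m : ℕ} {ep1 ep2 : Fin m → Fin n} (hep : ∀ k, ep1 k ≠ ep2 k)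
    {B : Fin m → ℝ} (hB : ∀ k, 0 < B k) (Bii Xd Xd' : Vec n) {ηb : Vec m} {Vb : Vec n}
    (hc : ∀ k, 0 < Real.cos (ηb k)) (hVb : ∀ i, 0 < Vb i)
    (hPD : (Schur ep1 ep2 B Bii Xd Xd' ηb Vb).PosDef)
    (δ : Vec m) (Δ : Vec n) (hne : ¬(δ = 0 ∧ Δ = 0)) :
    0 < qQ ep1 ep2 B Bii Xd Xd' ηb Vb δ Δ := by
  rw [qQ_decomp hep hB Bii Xd Xd' hc hVb δ Δ]
  have hsum_nonneg : ∀ k ∈ Finset.univ, (0:ℝ) ≤ (Vb (ep1 k) * Vb (ep2 k) * B k * Real.cos (ηb k) / 2)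
        * (δ k + (B k * Real.sin (ηb k) * (Vb (ep1 k) * Δ (ep2 k) + Vb (ep2 k) * Δ (ep1 k)))
            / (Vb (ep1 k) * Vb (ep2 k) * B k * Real.cos (ηb k))) ^ 2 := by
    intro k _
    apply mul_nonneg _ (sq_nonneg _)
    have := hVb (ep1 k); have := hVb (ep2 k); have := hB k; have := hc k
    positivity
  by_cases hΔ : Δ = 0
  · subst hΔ
    have hδ : δ ≠ 0 := fun h => hne ⟨h, rfl⟩
    obtain ⟨k0, hk0⟩ : ∃ k0, δ k0 ≠ 0 := by
      by_contra h
      push_neg at h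
      exact hδ (funext fun k => h k)
    simp only [Pi.zero_apply, mul_zero, zero_mul, add_zero, zero_div, zero_add,
      zero_dotProduct, dotProduct_zero, mul_zero, add_zero]
    refine Finset.sum_pos' (fun k _ => ?_) ⟨k0, Finset.mem_univ k0, ?_⟩
    · have := hVb (ep1 k); have := hVb (ep2 k); have := hB k; have := hc k
      positivity
    · have h1 : (0:ℝ) < Vb (ep1 k0) * Vb (ep2 k0) * B k0 * Real.cos (ηb k0) / 2 := by
        have := hVb (ep1 k0); have := hVb (ep2 k0); have := hB k0; have := hc k0
        positivity
      have h2 : (0:ℝ) < δ k0 ^ 2 := by positivity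
      exact mul_pos h1 h2
  · have h2 : 0 < (1/2) * (Δ ⬝ᵥ (Schur ep1 ep2 B Bii Xd Xd' ηb Vb).mulVec Δ) := by
      have := hPD.dotProduct_mulVec_pos hΔ
      simp only [star_trivial] at this
      linarith
    have h1 : 0 ≤ ∑ k, (Vb (ep1 k) * Vb (ep2 k) * B k * Real.cos (ηb k) / 2)
        * (δ k + (B k * Real.sin (ηb k) * (Vb (ep1 k) * Δ (ep2 k) + Vb (ep2 k) * Δ (ep1 k)))
            / (Vb (ep1 k) * Vb (ep2 k) * B k * Real.cos (ηb k))) ^ 2 :=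
      Finset.sum_nonneg hsum_nonneg
    linarith

lemma qQ_smul {n m : ℕ} (ep1 ep2 : Fin m → Fin n) (B : Fin m → ℝ) (Bii Xd Xd' : Vec n)
    (ηb : Vec m) (Vb : Vec n) (t : ℝ) (δ : Vec m) (Δ : Vec n) :
    qQ ep1 ep2 B Bii Xd Xd' ηb Vb (t • δ) (t • Δ) = t^2 * qQ ep1 ep2 B Bii Xd Xd' ηb Vb δ Δ := by
  rw [qQ, qQ]
  have h1 : ∑ i, (1 - Bii i * (Xd i - Xd' i)) / (Xd i - Xd' i) * ((t • Δ) i)^2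
      = ∑ i, t^2 * ((1 - Bii i * (Xd i - Xd' i)) / (Xd i - Xd' i) * (Δ i)^2) :=
    Finset.sum_congr rfl fun i _ => by simp only [Pi.smul_apply, smul_eq_mul]; ring
  have h2 : ∑ k, B k * (Real.sin (ηb k) * (t • δ) k * (Vb (ep1 k) * (t • Δ) (ep2 k)
        + Vb (ep2 k) * (t • Δ) (ep1 k))
      + (1/2) * (Vb (ep1 k) * Vb (ep2 k)) * Real.cos (ηb k) * ((t • δ) k)^2
      - Real.cos (ηb k) * (t • Δ) (ep1 k) * (t • Δ) (ep2 k))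
      = ∑ k, t^2 * (B k * (Real.sin (ηb k) * δ k * (Vb (ep1 k) * Δ (ep2 k)
          + Vb (ep2 k) * Δ (ep1 k))
        + (1/2) * (Vb (ep1 k) * Vb (ep2 k)) * Real.cos (ηb k) * (δ k)^2
        - Real.cos (ηb k) * Δ (ep1 k) * Δ (ep2 k))) :=
    Finset.sum_congr rfl fun k _ => by simp only [Pi.smul_apply, smul_eq_mul]; ring
  rw [h1, h2, ← Finset.mul_sum, ← Finset.mul_sum]
  ring

lemma qQ_continuous {n m : ℕ} (ep1 ep2 : Fin m → Fin n) (B : Fin m → ℝ) (Bii Xd Xd' : Vec n)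
    (ηb : Vec m) (Vb : Vec n) :
    Continuous (fun p : Vec m × Vec n => qQ ep1 ep2 B Bii Xd Xd' ηb Vb p.1 p.2) := by
  unfold qQ
  fun_prop

lemma qQ_coercive {n m : ℕ} {ep1 ep2 : Fin m → Fin n} (hep : ∀ k, ep1 k ≠ ep2 k)
    {B : Fin m → ℝ} (hB : ∀ k, 0 < B k) (Bii Xd Xd' : Vec n) {ηb : Vec m} {Vb : Vec n}
    (hc : ∀ k, 0 < Real.cos (ηb k)) (hVb : ∀ i, 0 < Vb i)
    (hPD : (Schur ep1 ep2 B Bii Xd Xd' ηb Vb).PosDef) :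
    ∃ c > 0, ∀ p : Vec m × Vec n, c * ‖p‖^2 ≤ qQ ep1 ep2 B Bii Xd Xd' ηb Vb p.1 p.2 := by
  rcases isEmpty_or_nonempty (Fin m ⊕ Fin n) with he | hne
  · have hm : IsEmpty (Fin m) := ⟨fun k => he.false (Sum.inl k)⟩
    have hn : IsEmpty (Fin n) := ⟨fun i => he.false (Sum.inr i)⟩
    refine ⟨1, one_pos, fun p => ?_⟩
    have h1 : p.1 = 0 := funext fun k => hm.elim k
    have h2 : p.2 = 0 := funext fun i => hn.elim i
    have hp : p = 0 := Prod.ext h1 h2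
    rw [hp]
    simp [qQ]
  · -- sphere is nonempty
    have hnt : Nontrivial (Vec m × Vec n) := by
      rcases hne.some with k | i
      · refine ⟨⟨(Pi.single k 1, 0), 0, fun h => ?_⟩⟩
        have := congrFun (congrArg Prod.fst h) k
        simp [Pi.single_eq_same] at this
      · refine ⟨⟨(0, Pi.single i 1), 0, fun h => ?_⟩⟩
        have := congrFun (congrArg Prod.snd h) i
        simp [Pi.single_eq_same] at this
    obtain ⟨u, hu_mem, hu_min⟩ := (isCompact_sphere (0 : Vec m × Vec n) 1).exists_isMinOn
      (NormedSpace.sphere_nonempty.mpr zero_le_one)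
      ((qQ_continuous ep1 ep2 B Bii Xd Xd' ηb Vb).continuousOn)
    have hu_norm : ‖u‖ = 1 := by simpa using mem_sphere_zero_iff_norm.mp hu_mem
    have hu_ne : ¬(u.1 = 0 ∧ u.2 = 0) := by
      rintro ⟨h1, h2⟩
      have : u = 0 := Prod.ext h1 h2
      rw [this] at hu_norm
      simp at hu_norm
    set c := qQ ep1 ep2 B Bii Xd Xd' ηb Vb u.1 u.2 with hc_def
    have hc_pos : 0 < c := qQ_pos hep hB Bii Xd Xd' hc hVb hPD u.1 u.2 hu_ne
    refine ⟨c, hc_pos, fun p => ?_⟩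
    by_cases hp : p = 0
    · rw [hp]
      simp [qQ]
    · have hnorm_pos : 0 < ‖p‖ := norm_pos_iff.mpr hp
      set v : Vec m × Vec n := ‖p‖⁻¹ • p with hv_def
      have hv_mem : v ∈ Metric.sphere (0 : Vec m × Vec n) 1 := by
        rw [mem_sphere_zero_iff_norm, hv_def, norm_smul, norm_inv, norm_norm,
          inv_mul_cancel₀ hnorm_pos.ne']
      have hpv : p = ‖p‖ • v := by
        rw [hv_def, smul_smul, mul_inv_cancel₀ hnorm_pos.ne', one_smul]
      have h1 : p.1 = ‖p‖ • v.1 := by conv_lhs => rw [hpv]; rw [Prod.smul_fst]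
      have h2 : p.2 = ‖p‖ • v.2 := by conv_lhs => rw [hpv]; rw [Prod.smul_snd]
      calc c * ‖p‖^2 ≤ qQ ep1 ep2 B Bii Xd Xd' ηb Vb v.1 v.2 * ‖p‖^2 := by
            have : c ≤ qQ ep1 ep2 B Bii Xd Xd' ηb Vb v.1 v.2 := hu_min hv_mem
            nlinarith [sq_nonneg ‖p‖, hnorm_pos]
        _ = qQ ep1 ep2 B Bii Xd Xd' ηb Vb p.1 p.2 := by
            rw [h1, h2, qQ_smul]
            ring

lemma cos_taylor (a d : ℝ) (hd : |d| ≤ 1) :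
    |Real.cos a - Real.cos (a + d) - Real.sin a * d - Real.cos a * d^2/2| ≤ |d|^3 := by
  have hc := Real.cos_bound hd
  have hs := Real.sin_bound hd
  have hca := Real.abs_cos_le_one a
  have hsa := Real.abs_sin_le_one a
  set X := -(Real.cos a * (Real.cos d - (1 - d^2/2))) with hX
  set Y := Real.sin a * (Real.sin d - (d - d^3/6)) with hY
  set Z := Real.sin a * (d^3/6) with hZ
  have hkey : Real.cos a - Real.cos (a + d) - Real.sin a * d - Real.cos a * d^2/2
      = X + Y - Z := by
    rw [hX, hY, hZ, Real.cos_add]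
    ring
  rw [hkey]
  have h4 : |d|^4 ≤ |d|^3 := by
    have h0 := abs_nonneg d
    calc |d|^4 = |d|^3 * |d| := by ring
      _ ≤ |d|^3 * 1 := by nlinarith [pow_nonneg (abs_nonneg d) 3]
      _ = |d|^3 := mul_one _
  have hd3 : |d^3/6| = |d|^3/6 := by
    rw [abs_div, abs_pow]
    norm_num
  have bX : |X| ≤ |d|^4 * (5/96) := by
    rw [hX, abs_neg, abs_mul]
    nlinarith [abs_nonneg (Real.cos d - (1 - d^2/2)), abs_nonneg (Real.cos a)]
  have bY : |Y| ≤ |d|^4 * (5/96) := by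
    rw [hY, abs_mul]
    have hs' : |Real.sin d - (d - d^3/6)| ≤ |d|^4 * (5/96) := by
      nlinarith [mul_le_mul_of_nonneg_left hd (pow_nonneg (abs_nonneg d) 4),
        pow_nonneg (abs_nonneg d) 4]
    nlinarith [abs_nonneg (Real.sin d - (d - d^3/6)), abs_nonneg (Real.sin a)]
  have bZ : |Z| ≤ |d|^3/6 := by
    rw [hZ, abs_mul, ← hd3]
    nlinarith [abs_nonneg (d^3/6), abs_nonneg (Real.sin a)]
  calc |X + Y - Z| ≤ |X + Y| + |Z| := abs_sub _ _
    _ ≤ |X| + |Y| + |Z| := by have := abs_add_le X Y; linarith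
    _ ≤ |d|^3 := by nlinarith [pow_nonneg (abs_nonneg d) 3]

lemma abs_mul_le' {a b A B : ℝ} (ha : |a| ≤ A) (hb : |b| ≤ B) : |a*b| ≤ A*B := by
  rw [abs_mul]
  exact mul_le_mul ha hb (abs_nonneg _) ((abs_nonneg a).trans ha)

lemma qR_bound {n m : ℕ} (ep1 ep2 : Fin m → Fin n) {B : Fin m → ℝ} (hB : ∀ k, 0 < B k)
    (ηb : Vec m) {Vb : Vec n} (hVb : ∀ i, 0 < Vb i) :
    ∃ K ≥ (0:ℝ), ∀ (δ : Vec m) (Δ : Vec n) (M : ℝ), 0 ≤ M → M ≤ 1 →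
      (∀ k, |δ k| ≤ M) → (∀ i, |Δ i| ≤ M) →
      |qR ep1 ep2 B ηb Vb δ Δ| ≤ K * M^3 := by
  set K : ℝ := ∑ k, B k * (1 + (Vb (ep1 k) + Vb (ep2 k) + 1)/2
      + (Vb (ep1 k) + 1) * (Vb (ep2 k) + 1)) with hK
  have hK0 : 0 ≤ K := Finset.sum_nonneg fun k _ => by
    have := hB k; have := hVb (ep1 k); have := hVb (ep2 k); positivity
  refine ⟨K, hK0, fun δ Δ M hM0 hM1 hδ hΔ => ?_⟩
  rw [qR]
  refine le_trans (Finset.abs_sum_le_sum_abs _ _) ?_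
  rw [hK, Finset.sum_mul]
  refine Finset.sum_le_sum fun k _ => ?_
  have hv1 : 0 < Vb (ep1 k) := hVb _
  have hv2 : 0 < Vb (ep2 k) := hVb _
  have hd1 : |Δ (ep1 k)| ≤ M := hΔ _
  have hd2 : |Δ (ep2 k)| ≤ M := hΔ _
  have hdk : |δ k| ≤ M := hδ _
  have hM3 : (0:ℝ) ≤ M^3 := by positivity
  have bT1 : |Real.sin (ηb k) * δ k * Δ (ep1 k) * Δ (ep2 k)| ≤ M^3 := by
    have := abs_mul_le' (abs_mul_le' (abs_mul_le' (Real.abs_sin_le_one (ηb k)) hdk) hd1) hd2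
    calc |Real.sin (ηb k) * δ k * Δ (ep1 k) * Δ (ep2 k)| ≤ 1 * M * M * M := this
      _ = M^3 := by ring
  have hS : |Vb (ep1 k) * Δ (ep2 k) + Vb (ep2 k) * Δ (ep1 k) + Δ (ep1 k) * Δ (ep2 k)|
      ≤ (Vb (ep1 k) + Vb (ep2 k) + 1) * M := by
    have h1 : |Vb (ep1 k) * Δ (ep2 k) + Vb (ep2 k) * Δ (ep1 k) + Δ (ep1 k) * Δ (ep2 k)|
        ≤ |Vb (ep1 k) * Δ (ep2 k)| + |Vb (ep2 k) * Δ (ep1 k)| + |Δ (ep1 k) * Δ (ep2 k)| := by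
      refine le_trans (abs_add_le _ _) ?_
      have := abs_add_le (Vb (ep1 k) * Δ (ep2 k)) (Vb (ep2 k) * Δ (ep1 k))
      linarith
    rw [abs_mul, abs_mul, abs_mul, abs_of_pos hv1, abs_of_pos hv2] at h1
    have hdd : |Δ (ep1 k)| * |Δ (ep2 k)| ≤ M * M :=
      mul_le_mul hd1 hd2 (abs_nonneg _) hM0
    have hMM : M * M ≤ 1 * M := mul_le_mul hM1 le_rfl hM0 zero_le_one
    nlinarith [abs_nonneg (Δ (ep1 k)), abs_nonneg (Δ (ep2 k))]
  have h2c : |Real.cos (ηb k) / 2| ≤ 1/2 := by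
    rw [abs_div, abs_of_pos (by norm_num : (0:ℝ) < 2)]
    have := Real.abs_cos_le_one (ηb k)
    linarith
  have h3 : |(δ k)^2| ≤ M^2 := by
    rw [abs_pow]
    exact pow_le_pow_left₀ (abs_nonneg _) hdk 2
  have bT2 : |Real.cos (ηb k) / 2 * (Vb (ep1 k) * Δ (ep2 k) + Vb (ep2 k) * Δ (ep1 k)
        + Δ (ep1 k) * Δ (ep2 k)) * (δ k)^2|
      ≤ (Vb (ep1 k) + Vb (ep2 k) + 1)/2 * M^3 := by
    have := abs_mul_le' (abs_mul_le' h2c hS) h3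
    calc _ ≤ 1/2 * ((Vb (ep1 k) + Vb (ep2 k) + 1) * M) * M^2 := this
      _ = (Vb (ep1 k) + Vb (ep2 k) + 1)/2 * M^3 := by ring
  have hδk1 : |δ k| ≤ 1 := hdk.trans hM1
  have br : |Real.cos (ηb k) - Real.cos (ηb k + δ k) - Real.sin (ηb k) * δ k
        - Real.cos (ηb k) * (δ k)^2 / 2| ≤ M^3 :=
    le_trans (cos_taylor (ηb k) (δ k) hδk1) (pow_le_pow_left₀ (abs_nonneg _) hdk 3)
  have hb1 : |Vb (ep1 k) + Δ (ep1 k)| ≤ Vb (ep1 k) + 1 := by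
    refine le_trans (abs_add_le _ _) ?_
    rw [abs_of_pos hv1]
    linarith
  have hb2 : |Vb (ep2 k) + Δ (ep2 k)| ≤ Vb (ep2 k) + 1 := by
    refine le_trans (abs_add_le _ _) ?_
    rw [abs_of_pos hv2]
    linarith
  have bT3 : |(Vb (ep1 k) + Δ (ep1 k)) * (Vb (ep2 k) + Δ (ep2 k))
        * (Real.cos (ηb k) - Real.cos (ηb k + δ k) - Real.sin (ηb k) * δ k
          - Real.cos (ηb k) * (δ k)^2 / 2)|
      ≤ (Vb (ep1 k) + 1) * (Vb (ep2 k) + 1) * M^3 :=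
    abs_mul_le' (abs_mul_le' hb1 hb2) br
  rw [abs_mul, abs_of_pos (hB k)]
  have htri : |Real.sin (ηb k) * δ k * Δ (ep1 k) * Δ (ep2 k)
      + Real.cos (ηb k) / 2 * (Vb (ep1 k) * Δ (ep2 k) + Vb (ep2 k) * Δ (ep1 k)
          + Δ (ep1 k) * Δ (ep2 k)) * (δ k)^2
      + (Vb (ep1 k) + Δ (ep1 k)) * (Vb (ep2 k) + Δ (ep2 k))
        * (Real.cos (ηb k) - Real.cos (ηb k + δ k) - Real.sin (ηb k) * δ k
            - Real.cos (ηb k) * (δ k)^2 / 2)|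
      ≤ M^3 + (Vb (ep1 k) + Vb (ep2 k) + 1)/2 * M^3
        + (Vb (ep1 k) + 1) * (Vb (ep2 k) + 1) * M^3 := by
    refine le_trans (abs_add_le _ _) ?_
    have := abs_add_le (Real.sin (ηb k) * δ k * Δ (ep1 k) * Δ (ep2 k))
      (Real.cos (ηb k) / 2 * (Vb (ep1 k) * Δ (ep2 k) + Vb (ep2 k) * Δ (ep1 k)
          + Δ (ep1 k) * Δ (ep2 k)) * (δ k)^2)
    linarith
  refine le_trans (mul_le_mul_of_nonneg_left htri (hB k).le) (le_of_eq ?_)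
  ring

/-- Lemma 2: under Assumption 3, `W₂` has a strict local minimum at
`(η̄, V̄)`, with `W₂(η̄, V̄) = 0`. -/
theorem W2_strict_local_minimum
    {n m : ℕ} (ep1 ep2 : Fin m → Fin n) (hep : ∀ k, ep1 k ≠ ep2 k)
    (B : Fin m → ℝ) (hB : ∀ k, 0 < B k)
    (Bii Xd Xd' : Vec n)
    (Efd : Vec n) (ηb : Vec m) (Vb : Vec n)
    (hηb : ∀ k, ηb k ∈ Set.Ioo (-(π / 2)) (π / 2))
    (hVb : ∀ i, 0 < Vb i)
    (hEfd : (Emat ep1 ep2 B Bii Xd Xd' ηb).mulVec Vb = Efd)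
    (hPD : (Schur ep1 ep2 B Bii Xd Xd' ηb Vb).PosDef) :
    W2 ep1 ep2 B Bii Xd Xd' Efd ηb Vb ηb Vb = 0 ∧
    ∃ U ∈ 𝓝 ((ηb, Vb) : Vec m × Vec n), ∀ p ∈ U, p ≠ (ηb, Vb) →
      W2 ep1 ep2 B Bii Xd Xd' Efd ηb Vb ηb Vb < W2 ep1 ep2 B Bii Xd Xd' Efd ηb Vb p.1 p.2 := by
  have hcos : ∀ k, 0 < Real.cos (ηb k) := fun k => Real.cos_pos_of_mem_Ioo (hηb k)
  have hzero : W2 ep1 ep2 B Bii Xd Xd' Efd ηb Vb ηb Vb = 0 := by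
    simp [W2]
  refine ⟨hzero, ?_⟩
  obtain ⟨c, hc_pos, hcoer⟩ := qQ_coercive hep hB Bii Xd Xd' hcos hVb hPD
  obtain ⟨K, hK0, hKb⟩ := qR_bound ep1 ep2 hB ηb hVb
  have hden : (0:ℝ) < c / (2 * (K + 1)) := by positivity
  set ε := min 1 (c / (2 * (K + 1))) with hε_def
  have hε_pos : 0 < ε := lt_min one_pos hden
  refine ⟨Metric.ball (ηb, Vb) ε, Metric.ball_mem_nhds _ hε_pos, fun p hp hpne => ?_⟩
  rw [hzero]
  set δ : Vec m := p.1 - ηb with hδ_def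
  set Δ : Vec n := p.2 - Vb with hΔ_def
  have hp1 : p.1 = ηb + δ := by rw [hδ_def]; abel
  have hp2 : p.2 = Vb + Δ := by rw [hΔ_def]; abel
  have hW : W2 ep1 ep2 B Bii Xd Xd' Efd ηb Vb p.1 p.2
      = qQ ep1 ep2 B Bii Xd Xd' ηb Vb δ Δ + qR ep1 ep2 B ηb Vb δ Δ := by
    conv_lhs => rw [← hEfd, hp1, hp2]
    exact W2_expand hep B Bii Xd Xd' ηb Vb δ Δ
  rw [hW]
  set M : ℝ := ‖p - ((ηb, Vb) : Vec m × Vec n)‖ with hM_def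
  have hsub : p - ((ηb, Vb) : Vec m × Vec n) = (δ, Δ) := rfl
  have hM_pos : 0 < M := by
    rw [hM_def]
    exact norm_pos_iff.mpr (sub_ne_zero.mpr hpne)
  have hMε : M < ε := by
    rw [hM_def]
    exact mem_ball_iff_norm.mp hp
  have hM1 : M ≤ 1 := (hMε.trans_le (min_le_left _ _)).le
  have hMc : M < c / (2 * (K + 1)) := hMε.trans_le (min_le_right _ _)
  have hδM : ∀ k, |δ k| ≤ M := fun k => by
    calc |δ k| = ‖δ k‖ := (Real.norm_eq_abs _).symm
      _ ≤ ‖δ‖ := norm_le_pi_norm δ k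
      _ = ‖((δ, Δ) : Vec m × Vec n).1‖ := rfl
      _ ≤ ‖((δ, Δ) : Vec m × Vec n)‖ := norm_fst_le _
      _ = M := by rw [hM_def, hsub]
  have hΔM : ∀ i, |Δ i| ≤ M := fun i => by
    calc |Δ i| = ‖Δ i‖ := (Real.norm_eq_abs _).symm
      _ ≤ ‖Δ‖ := norm_le_pi_norm Δ i
      _ = ‖((δ, Δ) : Vec m × Vec n).2‖ := rfl
      _ ≤ ‖((δ, Δ) : Vec m × Vec n)‖ := norm_snd_le _
      _ = M := by rw [hM_def, hsub]
  have hcoerp : c * M^2 ≤ qQ ep1 ep2 B Bii Xd Xd' ηb Vb δ Δ := by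
    have := hcoer (δ, Δ)
    rw [← hsub, ← hM_def] at this
    exact this
  have hRb : |qR ep1 ep2 B ηb Vb δ Δ| ≤ K * M^3 := hKb δ Δ M hM_pos.le hM1 hδM hΔM
  have hqR_lb : -(K * M^3) ≤ qR ep1 ep2 B ηb Vb δ Δ := (abs_le.mp hRb).1
  have h2 : M * (2 * (K + 1)) < c := by
    rw [lt_div_iff₀ (by positivity : (0:ℝ) < 2 * (K + 1))] at hMc
    linarith
  have hKM : K * M < c := by nlinarith [mul_nonneg hK0 hM_pos.le]
  have hfinal : 0 < c * M^2 - K * M^3 := by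
    have := mul_pos (sub_pos.mpr hKM) (pow_pos hM_pos 2)
    nlinarith
  linarith
end
end

section
/- Let (η, ω, V) : ℝ → ℝ^m × ℝⁿ × ℝⁿ be differentiable and satisfy η'(t) = Dᵀω(t), M·ω'(t) = u(t) − D·Γ(V(t))·sin(η(t)) − A·ω(t) − P^l, and T·V'(t) = −E(η(t))·V(t) + Ē_fd for all t, where P^l ∈ ℝⁿ is constant. Let (η̄, ω̄, V̄, ū) be a constant equilibrium, i.e. Dᵀω̄ = 0, 0 = ū − DΓ(V̄)sin(η̄) − Aω̄ − P^l, and E(η̄)V̄ = Ē_fd. Then the storage function U(η, ω, V) = ½(ω − ω̄)ᵀM(ω − ω̄) + W₂(η, V) satisfies, along the solution, d/dt U(η(t), ω(t), V(t)) = −(ω(t) − ω̄)ᵀA(ω(t) − ω̄) − (E(η(t))V(t) − Ē_fd)ᵀT⁻¹(E(η(t))V(t) − Ē_fd) + (ω(t) − ω̄)ᵀ(u(t) − ū). In particular, the power network system with input u and output y = ω is output strictly incrementally passive with respect to (η̄, ω̄, V̄). -/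
open Matrix Real Filter Topology Set

noncomputable section

lemma sum_pair {n : ℕ} {a b : Fin n} (hab : a ≠ b) (f : Fin n → Fin n → ℝ) :
    ∑ i, ∑ j, (if (a = i ∧ b = j) ∨ (a = j ∧ b = i) then f i j else 0) = f a b + f b a := by
  have key : ∀ i j, (if (a = i ∧ b = j) ∨ (a = j ∧ b = i) then f i j else 0)
      = (if a = i ∧ b = j then f i j else 0) + (if a = j ∧ b = i then f i j else 0) := by
    intro i j
    rcases Decidable.em (a = i ∧ b = j) with h1 | h1 <;>
      rcases Decidable.em (a = j ∧ b = i) with h2 | h2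
    · exact absurd (h1.1.trans h2.2.symm) hab
    · rw [if_pos (Or.inl h1), if_pos h1, if_neg h2, add_zero]
    · rw [if_pos (Or.inr h2), if_neg h1, if_pos h2, zero_add]
    · rw [if_neg (by tauto), if_neg h1, if_neg h2, add_zero]
  simp only [key, Finset.sum_add_distrib, ite_and]
  simp [Finset.sum_ite_eq]

lemma emat_dot {n m : ℕ} (ep1 ep2 : Fin m → Fin n) (hep : ∀ k, ep1 k ≠ ep2 k)
    (B : Fin m → ℝ) (Bii Xd Xd' : Vec n) (η : Vec m) (V v : Vec n) :
    ((Emat ep1 ep2 B Bii Xd Xd' η).mulVec V) ⬝ᵥ v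
    = (∑ i, (1 - Bii i * (Xd i - Xd' i)) / (Xd i - Xd' i) * (V i * v i))
      - ∑ k, (v (ep1 k) * V (ep2 k) + V (ep1 k) * v (ep2 k)) * (B k * Real.cos (η k)) := by
  have hE : ∀ i j, Emat ep1 ep2 B Bii Xd Xd' η i j
      = (if i = j then (1 - Bii i * (Xd i - Xd' i)) / (Xd i - Xd' i) else 0)
        - ∑ k, (if (ep1 k = i ∧ ep2 k = j) ∨ (ep1 k = j ∧ ep2 k = i)
          then B k * Real.cos (η k) else 0) := by
    intro i j
    by_cases h : i = j
    · subst h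
      simp only [Emat, Matrix.of_apply, if_pos rfl]
      have hz : ∀ k, (if (ep1 k = i ∧ ep2 k = i) ∨ (ep1 k = i ∧ ep2 k = i)
          then B k * Real.cos (η k) else 0) = 0 := by
        intro k
        have : ¬ ((ep1 k = i ∧ ep2 k = i) ∨ (ep1 k = i ∧ ep2 k = i)) := by
          rintro (⟨h1, h2⟩ | ⟨h1, h2⟩) <;> exact hep k (h1.trans h2.symm)
        exact if_neg this
      rw [Finset.sum_congr rfl fun k _ => hz k]
      simp
    · simp [Emat, h, sub_eq_neg_add, add_comm]
  have expand : ((Emat ep1 ep2 B Bii Xd Xd' η).mulVec V) ⬝ᵥ v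
      = ∑ i, ∑ j, Emat ep1 ep2 B Bii Xd Xd' η i j * (V j * v i) := by
    simp only [Matrix.mulVec, dotProduct, Finset.sum_mul]
    congr 1; funext i; congr 1; funext j; ring
  rw [expand]
  simp only [hE, sub_mul, Finset.sum_sub_distrib, Finset.sum_mul]
  congr 1
  · refine Finset.sum_congr rfl fun i _ => ?_
    simp [ite_mul, zero_mul, Finset.sum_ite_eq]
  · have hsw : ∀ i : Fin n, (∑ j, ∑ k, (if (ep1 k = i ∧ ep2 k = j) ∨ (ep1 k = j ∧ ep2 k = i)
          then B k * Real.cos (η k) else 0) * (V j * v i))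
        = ∑ k, ∑ j, (if (ep1 k = i ∧ ep2 k = j) ∨ (ep1 k = j ∧ ep2 k = i)
          then B k * Real.cos (η k) else 0) * (V j * v i) := fun i => Finset.sum_comm
    rw [Finset.sum_congr rfl fun i _ => hsw i, Finset.sum_comm]
    refine Finset.sum_congr rfl fun k _ => ?_
    simp only [ite_mul, zero_mul]
    rw [sum_pair (hep k) (fun i j => B k * Real.cos (η k) * (V j * v i))]
    ring

/-- Theorem 1: the power network with input `u` and output `y = ω` is
output strictly incrementally passive with respect to the constant equilibrium
`(η̄, ω̄, V̄)`: the storage function `U = ½(ω − ω̄)ᵀM(ω − ω̄) + W₂(η, V)` satisfies the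
stated dissipation equality along solutions. -/
theorem output_strict_incremental_passivity_network
    {n m : ℕ} (ep1 ep2 : Fin m → Fin n) (hep : ∀ k, ep1 k ≠ ep2 k)
    (B : Fin m → ℝ) (hB : ∀ k, 0 < B k)
    (Bii Xd Xd' : Vec n)
    (Md Ad Td : Vec n) (hM : ∀ i, 0 < Md i) (hA : ∀ i, 0 < Ad i) (hT : ∀ i, 0 < Td i)
    (Efd Pl : Vec n)
    (η : ℝ → Vec m) (ω ω' : ℝ → Vec n) (V V' : ℝ → Vec n) (u : ℝ → Vec n)
    (hη : ∀ t, HasDerivAt η ((incD ep1 ep2)ᵀ.mulVec (ω t)) t)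
    (hω : ∀ t, HasDerivAt ω (ω' t) t)
    (hωdyn : ∀ t, (Matrix.diagonal Md).mulVec (ω' t)
      = u t - (incD ep1 ep2).mulVec ((Gam ep1 ep2 B (V t)).mulVec (sinv (η t)))
        - (Matrix.diagonal Ad).mulVec (ω t) - Pl)
    (hV : ∀ t, HasDerivAt V (V' t) t)
    (hVdyn : ∀ t, (Matrix.diagonal Td).mulVec (V' t)
      = -(Emat ep1 ep2 B Bii Xd Xd' (η t)).mulVec (V t) + Efd)
    (ηb ωb Vb ub : _)
    (heq1 : (incD ep1 ep2)ᵀ.mulVec ωb = 0)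
    (heq2 : (0 : Vec n) = ub - (incD ep1 ep2).mulVec ((Gam ep1 ep2 B Vb).mulVec (sinv ηb))
      - (Matrix.diagonal Ad).mulVec ωb - Pl)
    (heq3 : (Emat ep1 ep2 B Bii Xd Xd' ηb).mulVec Vb = Efd) :
    ∀ t, HasDerivAt
      (fun s => (1 / 2) * ((ω s - ωb) ⬝ᵥ (Matrix.diagonal Md).mulVec (ω s - ωb))
        + W2 ep1 ep2 B Bii Xd Xd' Efd ηb Vb (η s) (V s))
      (-((ω t - ωb) ⬝ᵥ (Matrix.diagonal Ad).mulVec (ω t - ωb))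
        - (((Emat ep1 ep2 B Bii Xd Xd' (η t)).mulVec (V t) - Efd) ⬝ᵥ
            (Matrix.diagonal fun i => (Td i)⁻¹).mulVec
              ((Emat ep1 ep2 B Bii Xd Xd' (η t)).mulVec (V t) - Efd))
        + (ω t - ωb) ⬝ᵥ (u t - ub)) t := by
  intro t
  have hωi : ∀ i, HasDerivAt (fun s => ω s i) (ω' t i) t := fun i => hasDerivAt_pi.mp (hω t) i
  have hVi : ∀ i, HasDerivAt (fun s => V s i) (V' t i) t := fun i => hasDerivAt_pi.mp (hV t) i
  have hηi : ∀ k, HasDerivAt (fun s => η s k) (((incD ep1 ep2)ᵀ.mulVec (ω t)) k) t :=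
    fun k => hasDerivAt_pi.mp (hη t) k
  have hcos : ∀ k, HasDerivAt (fun s => Real.cos (η s k))
      (-Real.sin (η t k) * ((incD ep1 ep2)ᵀ.mulVec (ω t)) k) t :=
    fun k => (hηi k).cos
  -- the six pieces
  have p1 : HasDerivAt (fun s => ∑ i, (1/2) * ((ω s i - ωb i) * (Md i * (ω s i - ωb i))))
      (∑ i, (1/2) * (ω' t i * (Md i * (ω t i - ωb i)) + (ω t i - ωb i) * (Md i * ω' t i))) t :=
    HasDerivAt.fun_sum fun i _ =>
      (((hωi i).sub_const (ωb i)).mul (((hωi i).sub_const (ωb i)).const_mul (Md i))).const_mul (1/2)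
  have p2 : HasDerivAt (fun s => ∑ k, -(V s (ep1 k) * V s (ep2 k) * B k * Real.cos (η s k)))
      (∑ k, -((V' t (ep1 k) * V t (ep2 k) + V t (ep1 k) * V' t (ep2 k)) * B k * Real.cos (η t k)
        + V t (ep1 k) * V t (ep2 k) * B k *
          (-Real.sin (η t k) * ((incD ep1 ep2)ᵀ.mulVec (ω t)) k))) t :=
    HasDerivAt.fun_sum fun k _ =>
      ((((hVi (ep1 k)).mul (hVi (ep2 k))).mul_const (B k)).mul (hcos k)).neg
  have p3 : HasDerivAt
      (fun s => ∑ k, (Vb (ep1 k) * Vb (ep2 k) * B k * Real.sin (ηb k)) * (η s k - ηb k))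
      (∑ k, (Vb (ep1 k) * Vb (ep2 k) * B k * Real.sin (ηb k)) * ((incD ep1 ep2)ᵀ.mulVec (ω t)) k) t :=
    HasDerivAt.fun_sum fun k _ => ((hηi k).sub_const (ηb k)).const_mul _
  have p4 : HasDerivAt (fun s => ∑ i, Efd i * (V s i - Vb i)) (∑ i, Efd i * V' t i) t :=
    HasDerivAt.fun_sum fun i _ => ((hVi i).sub_const (Vb i)).const_mul _
  have p5 : HasDerivAt (fun s => ∑ i,
        (1/2) * (V s i * ((1 - Bii i * (Xd i - Xd' i)) / (Xd i - Xd' i) * V s i)))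
      (∑ i, (1/2) * (V' t i * ((1 - Bii i * (Xd i - Xd' i)) / (Xd i - Xd' i) * V t i)
        + V t i * ((1 - Bii i * (Xd i - Xd' i)) / (Xd i - Xd' i) * V' t i))) t :=
    HasDerivAt.fun_sum fun i _ =>
      ((hVi i).mul ((hVi i).const_mul _)).const_mul (1/2)
  have H := p1.add
    (((((p2.add_const ((1 : Vec m) ⬝ᵥ (Gam ep1 ep2 B Vb).mulVec (cosv ηb))).sub p3).sub
      p4).add p5).sub_const ((1 / 2) * (Vb ⬝ᵥ (Fmat Bii Xd Xd').mulVec Vb)))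
  -- the function in the statement equals the function in H
  have hfun : (fun s => (1 / 2) * ((ω s - ωb) ⬝ᵥ (Matrix.diagonal Md).mulVec (ω s - ωb))
        + W2 ep1 ep2 B Bii Xd Xd' Efd ηb Vb (η s) (V s))
      = (fun s => (∑ i, (1/2) * ((ω s i - ωb i) * (Md i * (ω s i - ωb i))))
        + ((((((∑ k, -(V s (ep1 k) * V s (ep2 k) * B k * Real.cos (η s k)))
            + (1 : Vec m) ⬝ᵥ (Gam ep1 ep2 B Vb).mulVec (cosv ηb))
          - ∑ k, (Vb (ep1 k) * Vb (ep2 k) * B k * Real.sin (ηb k)) * (η s k - ηb k))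
          - ∑ i, Efd i * (V s i - Vb i))
          + ∑ i, (1/2) * (V s i * ((1 - Bii i * (Xd i - Xd' i)) / (Xd i - Xd' i) * V s i)))
          - (1 / 2) * (Vb ⬝ᵥ (Fmat Bii Xd Xd').mulVec Vb))) := by
    funext s
    have e1 : (1 / 2 : ℝ) * ((ω s - ωb) ⬝ᵥ (Matrix.diagonal Md).mulVec (ω s - ωb))
        = ∑ i, (1/2) * ((ω s i - ωb i) * (Md i * (ω s i - ωb i))) := by
      simp [dotProduct, Matrix.mulVec_diagonal, Finset.mul_sum]
    have e2 : -((1 : Vec m) ⬝ᵥ (Gam ep1 ep2 B (V s)).mulVec (cosv (η s)))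
        = ∑ k, -(V s (ep1 k) * V s (ep2 k) * B k * Real.cos (η s k)) := by
      simp [dotProduct, Gam, Matrix.mulVec_diagonal, cosv, mul_assoc]
    have e3 : ((Gam ep1 ep2 B Vb).mulVec (sinv ηb)) ⬝ᵥ (η s - ηb)
        = ∑ k, (Vb (ep1 k) * Vb (ep2 k) * B k * Real.sin (ηb k)) * (η s k - ηb k) := by
      simp [dotProduct, Gam, Matrix.mulVec_diagonal, sinv, mul_assoc]
    have e4 : Efd ⬝ᵥ (V s - Vb) = ∑ i, Efd i * (V s i - Vb i) := by
      simp [dotProduct]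
    have e5 : (1 / 2 : ℝ) * (V s ⬝ᵥ (Fmat Bii Xd Xd').mulVec (V s))
        = ∑ i, (1/2) * (V s i * ((1 - Bii i * (Xd i - Xd' i)) / (Xd i - Xd' i) * V s i)) := by
      simp [dotProduct, Fmat, Matrix.mulVec_diagonal, Finset.mul_sum]
    simp only [W2]
    rw [e1, e2, e3, e4, e5]
  rw [hfun]
  convert H using 1
  case e'_4 => rfl
  case e'_5 => rfl
  case e'_8 => rfl
  -- now the equality of the derivative values
  have hx : (incD ep1 ep2)ᵀ.mulVec (ω t - ωb) = (incD ep1 ep2)ᵀ.mulVec (ω t) := by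
    rw [Matrix.mulVec_sub, heq1, sub_zero]
  have hd1 : (∑ i, (1/2) * (ω' t i * (Md i * (ω t i - ωb i)) + (ω t i - ωb i) * (Md i * ω' t i)))
      = (ω t - ωb) ⬝ᵥ (Matrix.diagonal Md).mulVec (ω' t) := by
    simp only [dotProduct, Matrix.mulVec_diagonal, Pi.sub_apply]
    exact Finset.sum_congr rfl fun i _ => by ring
  have hPl : Pl = ub - (incD ep1 ep2).mulVec ((Gam ep1 ep2 B Vb).mulVec (sinv ηb))
      - (Matrix.diagonal Ad).mulVec ωb := by
    funext i
    have h := congrFun heq2 i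
    simp only [Pi.zero_apply, Pi.sub_apply] at h ⊢
    linarith
  have hMd : (Matrix.diagonal Md).mulVec (ω' t)
      = (u t - ub) - (Matrix.diagonal Ad).mulVec (ω t - ωb)
        - (incD ep1 ep2).mulVec ((Gam ep1 ep2 B (V t)).mulVec (sinv (η t))
            - (Gam ep1 ep2 B Vb).mulVec (sinv ηb)) := by
    rw [hωdyn t, hPl, Matrix.mulVec_sub, Matrix.mulVec_sub]
    abel
  have f1 : (∑ i, (1/2) * (ω' t i * (Md i * (ω t i - ωb i)) + (ω t i - ωb i) * (Md i * ω' t i)))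
      = (ω t - ωb) ⬝ᵥ (u t - ub)
        - (ω t - ωb) ⬝ᵥ (Matrix.diagonal Ad).mulVec (ω t - ωb)
        - (ω t - ωb) ⬝ᵥ (incD ep1 ep2).mulVec ((Gam ep1 ep2 B (V t)).mulVec (sinv (η t))
            - (Gam ep1 ep2 B Vb).mulVec (sinv ηb)) := by
    rw [hd1, hMd, dotProduct_sub, dotProduct_sub]
  have f2 : (∑ k, -((V' t (ep1 k) * V t (ep2 k) + V t (ep1 k) * V' t (ep2 k)) * B k * Real.cos (η t k)
        + V t (ep1 k) * V t (ep2 k) * B k * (-Real.sin (η t k) * ((incD ep1 ep2)ᵀ.mulVec (ω t)) k)))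
      = (∑ k, -((V' t (ep1 k) * V t (ep2 k) + V t (ep1 k) * V' t (ep2 k)) * (B k * Real.cos (η t k))))
        + ∑ k, (V t (ep1 k) * V t (ep2 k) * B k * Real.sin (η t k)) * ((incD ep1 ep2)ᵀ.mulVec (ω t)) k := by
    rw [← Finset.sum_add_distrib]
    exact Finset.sum_congr rfl fun k _ => by ring
  have f3 : (∑ k, (V t (ep1 k) * V t (ep2 k) * B k * Real.sin (η t k)) * ((incD ep1 ep2)ᵀ.mulVec (ω t)) k)
        - (∑ k, (Vb (ep1 k) * Vb (ep2 k) * B k * Real.sin (ηb k)) * ((incD ep1 ep2)ᵀ.mulVec (ω t)) k)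
      = ((Gam ep1 ep2 B (V t)).mulVec (sinv (η t)) - (Gam ep1 ep2 B Vb).mulVec (sinv ηb)) ⬝ᵥ
          ((incD ep1 ep2)ᵀ.mulVec (ω t)) := by
    rw [← Finset.sum_sub_distrib]
    simp only [dotProduct, Pi.sub_apply, Gam, Matrix.mulVec_diagonal, sinv]
    exact Finset.sum_congr rfl fun k _ => by ring
  have f4 : ((Gam ep1 ep2 B (V t)).mulVec (sinv (η t)) - (Gam ep1 ep2 B Vb).mulVec (sinv ηb)) ⬝ᵥ
        ((incD ep1 ep2)ᵀ.mulVec (ω t))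
      = (ω t - ωb) ⬝ᵥ (incD ep1 ep2).mulVec ((Gam ep1 ep2 B (V t)).mulVec (sinv (η t))
            - (Gam ep1 ep2 B Vb).mulVec (sinv ηb)) := by
    rw [← hx, Matrix.mulVec_transpose, dotProduct_mulVec]
    exact dotProduct_comm _ _
  have f5 : (∑ k, -((V' t (ep1 k) * V t (ep2 k) + V t (ep1 k) * V' t (ep2 k)) * (B k * Real.cos (η t k))))
        - (∑ i, Efd i * V' t i)
        + (∑ i, (1/2) * (V' t i * ((1 - Bii i * (Xd i - Xd' i)) / (Xd i - Xd' i) * V t i)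
            + V t i * ((1 - Bii i * (Xd i - Xd' i)) / (Xd i - Xd' i) * V' t i)))
      = ((Emat ep1 ep2 B Bii Xd Xd' (η t)).mulVec (V t) - Efd) ⬝ᵥ V' t := by
    have auxc : (∑ i, (1/2) * (V' t i * ((1 - Bii i * (Xd i - Xd' i)) / (Xd i - Xd' i) * V t i)
            + V t i * ((1 - Bii i * (Xd i - Xd' i)) / (Xd i - Xd' i) * V' t i)))
        = ∑ i, (1 - Bii i * (Xd i - Xd' i)) / (Xd i - Xd' i) * (V t i * V' t i) :=
      Finset.sum_congr rfl fun i _ => by ring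
    rw [sub_dotProduct, emat_dot ep1 ep2 hep B Bii Xd Xd' (η t) (V t) (V' t), auxc]
    simp only [dotProduct]
    rw [Finset.sum_neg_distrib]
    ring
  have f6 : ((Emat ep1 ep2 B Bii Xd Xd' (η t)).mulVec (V t) - Efd) ⬝ᵥ V' t
      = -(((Emat ep1 ep2 B Bii Xd Xd' (η t)).mulVec (V t) - Efd) ⬝ᵥ
          (Matrix.diagonal fun i => (Td i)⁻¹).mulVec
            ((Emat ep1 ep2 B Bii Xd Xd' (η t)).mulVec (V t) - Efd)) := by
    have hv : ∀ i, V' t i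
        = (Td i)⁻¹ * (-(((Emat ep1 ep2 B Bii Xd Xd' (η t)).mulVec (V t)) i - Efd i)) := by
      intro i
      have h := congrFun (hVdyn t) i
      simp only [Matrix.mulVec_diagonal, Pi.add_apply, Pi.neg_apply] at h
      have hTne : Td i ≠ 0 := (hT i).ne'
      field_simp
      linarith
    simp only [dotProduct, Matrix.mulVec_diagonal, Pi.sub_apply]
    rw [show -(∑ i, ((Emat ep1 ep2 B Bii Xd Xd' (η t) *ᵥ V t) i - Efd i)
          * ((Td i)⁻¹ * ((Emat ep1 ep2 B Bii Xd Xd' (η t) *ᵥ V t) i - Efd i)))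
        = ∑ i, -(((Emat ep1 ep2 B Bii Xd Xd' (η t) *ᵥ V t) i - Efd i)
          * ((Td i)⁻¹ * ((Emat ep1 ep2 B Bii Xd Xd' (η t) *ᵥ V t) i - Efd i)))
        from by rw [Finset.sum_neg_distrib]]
    refine Finset.sum_congr rfl fun i _ => ?_
    rw [hv i]; ring
  rw [f2]
  linarith [f1, f3, f4, f5, f6]
end
end

section
/- Let S ∈ ℝ^{r×r} be skew-symmetric and invertible (equivalently, skew-symmetric with purely imaginary nonzero eigenvalues), and let R ∈ ℝ^{1×r} be such that the pair (R, S) is observable, i.e. the only vector x with R·Sʲ·x = 0 for all j = 0, 1, …, r−1 is x = 0. If x : ℝ → ℝ^r is differentiable with x'(t) = S·x(t) for all t and the scalar function t ↦ R·x(t) is constant, then x(t) = 0 for all t (and the constant value of R·x is 0). -/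
open Matrix

noncomputable section

private lemma dot_deriv {r : ℕ} (S : Matrix (Fin r) (Fin r) ℝ)
    (x : ℝ → Fin r → ℝ) (hx : ∀ t, HasDerivAt x (S.mulVec (x t)) t)
    (w : Fin r → ℝ) (t : ℝ) :
    HasDerivAt (fun s => w ⬝ᵥ x s) (w ⬝ᵥ S.mulVec (x t)) t := by
  have h : ∀ i : Fin r, HasDerivAt (fun s => x s i) (S.mulVec (x t) i) t := by
    intro i
    exact ((ContinuousLinearMap.proj (R := ℝ) (φ := fun _ : Fin r => ℝ) i).hasFDerivAt).comp_hasDerivAt t (hx t)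
  simp only [dotProduct]
  exact HasDerivAt.fun_sum fun i _ => (h i).const_mul (w i)

/-- if `S` is skew-symmetric and invertible, `(R, S)` is observable, and a
trajectory of `ẋ = Sx` has constant output `Rx`, then the trajectory is identically zero
(and the constant output value is zero). -/
theorem observable_oscillator_constant_output_zero
    {r : ℕ} (S : Matrix (Fin r) (Fin r) ℝ) (R : Fin r → ℝ)
    (hskew : Sᵀ = -S) (hinv : IsUnit S.det)
    (hobs : ∀ x : Fin r → ℝ, (∀ j < r, R ⬝ᵥ (S ^ j).mulVec x = 0) → x = 0)
    (x : ℝ → Fin r → ℝ)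
    (hx : ∀ t, HasDerivAt x (S.mulVec (x t)) t)
    (hconst : ∃ c : ℝ, ∀ t, R ⬝ᵥ x t = c) :
    (∀ t, x t = 0) ∧ (∀ t, R ⬝ᵥ x t = 0) := by
  obtain ⟨c, hc⟩ := hconst
  -- derivative of j-th output
  have hd : ∀ (j : ℕ) (t : ℝ),
      HasDerivAt (fun s => R ⬝ᵥ (S ^ j).mulVec (x s)) (R ⬝ᵥ (S ^ (j + 1)).mulVec (x t)) t := by
    intro j t
    have := dot_deriv S x hx (R ᵥ* (S ^ j)) t
    have e1 : ∀ v : Fin r → ℝ, (R ᵥ* (S ^ j)) ⬝ᵥ v = R ⬝ᵥ (S ^ j).mulVec v := by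
      intro v; rw [Matrix.dotProduct_mulVec]
    have e2 : (R ᵥ* (S ^ j)) ⬝ᵥ S.mulVec (x t) = R ⬝ᵥ (S ^ (j + 1)).mulVec (x t) := by
      rw [e1, Matrix.mulVec_mulVec, ← pow_succ]
    rw [e2] at this
    exact this.congr_deriv rfl |>.congr_of_eventuallyEq (Filter.Eventually.of_forall fun s => (e1 (x s)).symm) |>.congr_deriv rfl
  -- all outputs with j ≥ 1 vanish
  have hz : ∀ (j : ℕ) (t : ℝ), R ⬝ᵥ (S ^ (j + 1)).mulVec (x t) = 0 := by
    intro j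
    induction j with
    | zero =>
      intro t
      have h1 := hd 0 t
      have h0 : HasDerivAt (fun s => R ⬝ᵥ (S ^ 0).mulVec (x s)) 0 t := by
        have : (fun s => R ⬝ᵥ (S ^ 0).mulVec (x s)) = fun _ => c := by
          funext s; simpa using hc s
        rw [this]; exact hasDerivAt_const t c
      simpa using h1.unique h0
    | succ j ih =>
      intro t
      have h1 := hd (j + 1) t
      have h0 : HasDerivAt (fun s => R ⬝ᵥ (S ^ (j + 1)).mulVec (x s)) 0 t := by
        have : (fun s => R ⬝ᵥ (S ^ (j + 1)).mulVec (x s)) = fun _ => 0 := funext ih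
        rw [this]; exact hasDerivAt_const t 0
      simpa using h1.unique h0
  have hx0 : ∀ t, x t = 0 := by
    intro t
    have hS : S.mulVec (x t) = 0 := by
      apply hobs
      intro j _
      have := hz j t
      rwa [Matrix.mulVec_mulVec, ← pow_succ] 
    have : x t = (S⁻¹ * S).mulVec (x t) := by
      rw [Matrix.nonsing_inv_mul S hinv, Matrix.one_mulVec]
    rw [this, ← Matrix.mulVec_mulVec, hS, Matrix.mulVec_zero]
  exact ⟨hx0, fun t => by rw [hx0 t, _root_.dotProduct_zero]⟩
end
end
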